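/- Let (S₁,·) and (S₂,·) be semigroups and let A ⊆ S₁ and B ⊆ S₂ be J-sets (in the non-commutative sense). Then A × B is a J-set (in the non-commutative sense) in the product semigroup S₁ × S₂ (with coordinatewise multiplication). -/

import Mathlib

/-- The interleaved product `x(m, a, t, f) = (∏_{j=1}^{m} a(j)·f(t(j))) · a(m+1)`
in a semigroup. -/
def interProd {S : Type*} [Semigroup S] (m : ℕ) (a : Fin (m + 1) → S) (t : Fin m → ℕ)
    (f : ℕ → S) : S :=
  ((List.finRange m).map (fun j => a j.castSucc * f (t j))).foldr (· * ·) (a (Fin.last m))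

/-- A set `A` in a semigroup `S` is a J-set (in the non-commutative sense) if for every
finite nonempty set `F` of sequences in `S` there are `m ≥ 1`, `a ∈ S^{m+1}` and
`t(1) < … < t(m)` in `ℕ` such that `a(1)·f(t(1))·a(2)·f(t(2))⋯a(m)·f(t(m))·a(m+1) ∈ A`
for every `f ∈ F`. -/
def IsJSetNC {S : Type*} [Semigroup S] (A : Set S) : Prop :=
  ∀ F : Finset (ℕ → S), F.Nonempty →
    ∃ m : ℕ, 0 < m ∧ ∃ a : Fin (m + 1) → S, ∃ t : Fin m → ℕ, StrictMono t ∧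
      ∀ f ∈ F, interProd m a t f ∈ A

namespace JsetAux

variable {S : Type*} [Semigroup S]

/-- `pv f [(c₁,n₁),…,(cₖ,nₖ)] d = c₁ * f n₁ * (c₂ * f n₂ * (⋯ * d))`. -/
def pv (f : ℕ → S) : List (S × ℕ) → S → S
  | [], d => d
  | (c, n) :: l, d => c * f n * pv f l d

lemma pv_append (f : ℕ → S) (l₁ l₂ : List (S × ℕ)) (d : S) :
    pv f (l₁ ++ l₂) d = pv f l₁ (pv f l₂ d) := by
  induction l₁ with
  | nil => rfl
  | cons p l ih => cases p; simp [pv, ih]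

lemma foldr_map_eq_pv (f : ℕ → S) (L : List (S × ℕ)) (d : S) :
    ((L.map fun p => p.1 * f p.2).foldr (· * ·) d) = pv f L d := by
  induction L with
  | nil => rfl
  | cons p l ih => cases p; simp [pv, ih]

lemma interProd_eq_pv (m : ℕ) (a : Fin (m + 1) → S) (t : Fin m → ℕ) (f : ℕ → S) :
    interProd m a t f
      = pv f (((List.finRange m).map (fun j => (a j.castSucc, t j)))) (a (Fin.last m)) := by
  rw [interProd, ← foldr_map_eq_pv, List.map_map]
  rfl

/-- Filler-interleaved product of `f` over a list of indices. -/
def blk (ε : S) (f : ℕ → S) : List ℕ → S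
  | [] => ε
  | [n] => f n
  | n :: m :: l => f n * (ε * blk ε f (m :: l))

lemma blk_expand (ε : S) (f : ℕ → S) :
    ∀ (l : List ℕ), l ≠ [] → ∀ (c : S) (X : S),
      c * blk ε f l * X = pv f ((c :: List.replicate (l.length - 1) ε).zip l) X := by
  intro l
  induction l with
  | nil => intro h; exact absurd rfl h
  | cons n l ih =>
    intro _ c X
    cases l with
    | nil => simp [blk, pv]
    | cons m l' =>
      have h' := ih (by simp) ε X
      simp only [List.length_cons, Nat.add_sub_cancel] at h' ⊢
      show c * (f n * (ε * blk ε f (m :: l'))) * X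
        = pv f ((c, n) :: ((ε :: List.replicate l'.length ε).zip (m :: l'))) X
      rw [pv, ← h']
      simp [mul_assoc]

/-- The family `G` admits a uniform pattern over the index list `l` landing in `A`. -/
def SolvesOn (A : Set S) (G : Finset (ℕ → S)) (l : List ℕ) : Prop :=
  ∃ (c : List S) (d : S), c.length = l.length ∧ ∀ f ∈ G, pv f (c.zip l) d ∈ A

lemma jset_list_form {A : Set S} (hA : IsJSetNC A) (G : Finset (ℕ → S)) (hG : G.Nonempty) :
    ∃ (ks : List ℕ) (c : List S) (d : S), ks ≠ [] ∧ ks.Pairwise (· < ·) ∧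
      c.length = ks.length ∧ ∀ g ∈ G, pv g (c.zip ks) d ∈ A := by
  obtain ⟨m, hm, a, t, ht, h⟩ := hA G hG
  refine ⟨(List.finRange m).map t, (List.finRange m).map (fun j => a j.castSucc),
    a (Fin.last m), ?_, ?_, by simp, ?_⟩
  · simp [List.map_eq_nil_iff, ← List.length_eq_zero_iff, Nat.pos_iff_ne_zero.mp hm]
  · exact (List.pairwise_lt_finRange m).map _ (fun _ _ hij => ht hij)
  · intro g hg
    rw [List.zip_map', ← interProd_eq_pv]
    exact h g hg

end JsetAux

namespace JsetAux
variable {S : Type*} [Semigroup S]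


lemma flatten (Γ : ℕ → List ℕ) (ε : S) :
    ∀ (ks : List ℕ), (∀ k ∈ ks, Γ k ≠ []) → ∀ (c : List S), c.length = ks.length →
      ∃ C : List S, C.length = (ks.flatMap Γ).length ∧
        ∀ (f : ℕ → S) (d : S), pv (fun k => blk ε f (Γ k)) (c.zip ks) d
          = pv f (C.zip (ks.flatMap Γ)) d := by
  intro ks
  induction ks with
  | nil =>
    intro _ c hc
    simp only [List.length_nil] at hc
    rw [List.length_eq_zero_iff] at hc
    subst hc
    exact ⟨[], by simp, fun f d => rfl⟩
  | cons k ks ih =>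
    intro hne c hc
    cases c with
    | nil => simp at hc
    | cons c₀ c' =>
      simp only [List.length_cons, Nat.add_right_cancel_iff] at hc
      obtain ⟨C', hC'len, hC'⟩ := ih (fun j hj => hne j (List.mem_cons_of_mem _ hj)) c' hc
      have hΓk := hne k List.mem_cons_self
      refine ⟨(c₀ :: List.replicate ((Γ k).length - 1) ε) ++ C', ?_, ?_⟩
      · simp only [List.flatMap_cons, List.length_append, List.length_cons,
          List.length_replicate, hC'len]
        have : (Γ k).length - 1 + 1 = (Γ k).length :=
          Nat.succ_pred_eq_of_pos (List.length_pos_iff.mpr hΓk)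
        omega
      · intro f d
        show c₀ * blk ε f (Γ k) * pv (fun k => blk ε f (Γ k)) (c'.zip ks) d = _
        rw [hC' f d, blk_expand ε f (Γ k) hΓk c₀ (pv f (C'.zip (ks.flatMap Γ)) d),
          List.flatMap_cons, ← pv_append]
        congr 1
        rw [List.zip_append]
        simp [List.length_replicate]
        have : (Γ k).length - 1 + 1 = (Γ k).length :=
          Nat.succ_pred_eq_of_pos (List.length_pos_iff.mpr hΓk)
        omega

lemma exists_block_solution {A : Set S} (hA : IsJSetNC A) (G : Finset (ℕ → S))
    (hG : G.Nonempty) (Γ : ℕ → List ℕ) (hne : ∀ k, Γ k ≠ []) :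
    ∃ ks : List ℕ, ks ≠ [] ∧ ks.Pairwise (· < ·) ∧ SolvesOn A G (ks.flatMap Γ) := by
  classical
  obtain ⟨g₀, hg₀⟩ := hG
  set ε : S := g₀ 0 with hε
  set G' : Finset (ℕ → S) := G.image (fun f => fun k => blk ε f (Γ k)) with hG'
  obtain ⟨ks, c, d, hks, hpw, hlen, h⟩ := jset_list_form hA G' ⟨_, Finset.mem_image_of_mem _ hg₀⟩
  obtain ⟨C, hClen, hC⟩ := flatten Γ ε ks (fun k _ => hne k) c hlen
  refine ⟨ks, hks, hpw, C, d, hClen, ?_⟩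
  intro f hf
  rw [← hC f d]
  exact h _ (Finset.mem_image_of_mem _ hf)

end JsetAux



namespace JsetAux

section ToPattern
variable {S : Type*} [Semigroup S]

lemma toPattern (c : List S) (l : List ℕ) (d : S) (h : c.length = l.length) (f : ℕ → S) :
    interProd l.length
      (fun j => if h' : (j : ℕ) < c.length then c.get ⟨j, h'⟩ else d) l.get f
      = pv f (c.zip l) d := by
  rw [interProd_eq_pv]
  have hlast : ¬ ((Fin.last l.length : ℕ) < c.length) := by simp [h]
  rw [dif_neg hlast]
  congr 1
  apply List.ext_get
  · simp [h]
  · intro i h₁ h₂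
    have hi : i < l.length := by simpa using h₁
    have hic : i < c.length := h ▸ hi
    simp only [List.get_eq_getElem, List.getElem_map, List.getElem_finRange, List.getElem_zip]
    congr 1
    · rw [dif_pos]
      · congr 1
      · simpa using hic

end ToPattern

section ProdComp
variable {S₁ S₂ : Type*} [Semigroup S₁] [Semigroup S₂]

lemma foldr_fst (L : List (S₁ × S₂)) (d : S₁ × S₂) :
    (L.foldr (· * ·) d).1 = (L.map Prod.fst).foldr (· * ·) d.1 := by
  induction L with
  | nil => rfl
  | cons x l ih => simp [ih]

lemma foldr_snd (L : List (S₁ × S₂)) (d : S₁ × S₂) :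
    (L.foldr (· * ·) d).2 = (L.map Prod.snd).foldr (· * ·) d.2 := by
  induction L with
  | nil => rfl
  | cons x l ih => simp [ih]

lemma interProd_fst (m : ℕ) (a : Fin (m + 1) → S₁ × S₂) (t : Fin m → ℕ) (f : ℕ → S₁ × S₂) :
    (interProd m a t f).1 = interProd m (fun j => (a j).1) t (fun n => (f n).1) := by
  rw [interProd, interProd, foldr_fst, List.map_map]
  rfl

lemma interProd_snd (m : ℕ) (a : Fin (m + 1) → S₁ × S₂) (t : Fin m → ℕ) (f : ℕ → S₁ × S₂) :
    (interProd m a t f).2 = interProd m (fun j => (a j).2) t (fun n => (f n).2) := by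
  rw [interProd, interProd, foldr_snd, List.map_map]
  rfl

end ProdComp

end JsetAux


namespace JsetAux

/-- Finite subsets of `ℕ` with a cardinality tracker, under union/addition. -/
structure MB where
  s : Finset ℕ
  c : ℕ

instance : Mul MB := ⟨fun x y => ⟨x.s ∪ y.s, x.c + y.c⟩⟩

lemma MB.mul_def (x y : MB) : x * y = ⟨x.s ∪ y.s, x.c + y.c⟩ := rfl

instance : Semigroup MB :=
  ⟨by intro a b c; simp [MB.mul_def, Finset.union_assoc, Nat.add_assoc]⟩

/-- The base stream of singletons. -/
def aMB : Stream' MB := fun n => ⟨{n}, 1⟩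

lemma FP_aMB_inv : ∀ (t : Stream' MB) (x : MB), x ∈ Hindman.FP t →
    ∀ k : ℕ, t = Stream'.drop k aMB →
      x.c = x.s.card ∧ x.s.Nonempty ∧ ∀ i ∈ x.s, k ≤ i := by
  intro t x hx
  induction hx with
  | head' a =>
    intro k hk
    subst hk
    rw [Stream'.head_drop]
    exact ⟨by simp [aMB, Stream'.get], by simp [aMB, Stream'.get], by simp [aMB, Stream'.get]⟩
  | tail' a m h ih =>
    intro k hk
    have : a.tail = Stream'.drop (k + 1) aMB := by
      rw [hk, Stream'.tail_eq_drop, Stream'.drop_drop, Nat.add_comm]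
    obtain ⟨h1, h2, h3⟩ := ih (k + 1) this
    exact ⟨h1, h2, fun i hi => le_of_lt (Nat.lt_of_succ_le (h3 i hi))⟩
  | cons' a m h ih =>
    intro k hk
    have : a.tail = Stream'.drop (k + 1) aMB := by
      rw [hk, Stream'.tail_eq_drop, Stream'.drop_drop, Nat.add_comm]
    obtain ⟨h1, h2, h3⟩ := ih (k + 1) this
    have hhead : a.head = (⟨{k}, 1⟩ : MB) := by
      rw [hk, Stream'.head_drop]; rfl
    have hknm : k ∉ m.s := fun hmem => by
      have := h3 k hmem; omega
    constructor
    · rw [hhead, MB.mul_def]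
      simp only
      rw [h1]
      have : ({k} : Finset ℕ) ∪ m.s = insert k m.s := by
        rw [Finset.insert_eq]
      rw [this, Finset.card_insert_of_notMem hknm]
      omega
    constructor
    · rw [hhead, MB.mul_def]
      simp only
      exact ⟨k, by simp⟩
    · intro i hi
      rw [hhead, MB.mul_def] at hi
      simp only [Finset.mem_union, Finset.mem_singleton] at hi
      rcases hi with rfl | hi
      · exact le_refl _
      · exact le_of_lt (Nat.lt_of_succ_le (h3 i hi))

lemma mem_FP_aMB {x : MB} (hx : x ∈ Hindman.FP aMB) :
    x.c = x.s.card ∧ x.s.Nonempty := by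
  have : aMB = Stream'.drop 0 aMB := by
    apply Stream'.ext; intro n; rw [Stream'.get_drop]
    rw [Nat.zero_add]
  obtain ⟨h1, h2, _⟩ := FP_aMB_inv aMB x (by rwa [this] at hx) 0 this
  exact ⟨h1, h2⟩

/-- Interleaved product of a stream over a nonempty index list (head `i`, tail `l`). -/
def prodFrom {M : Type*} [Semigroup M] (b : Stream' M) : ℕ → List ℕ → M
  | i, [] => b.get i
  | i, j :: l => b.get i * prodFrom b j l

lemma prodFrom_mem {M : Type*} [Semigroup M] (b : Stream' M) :
    ∀ (l : List ℕ) (i k : ℕ), k ≤ i → (i :: l).Pairwise (· < ·) →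
      prodFrom b i l ∈ Hindman.FP (Stream'.drop k b) := by
  intro l
  induction l with
  | nil =>
    intro i k hk _
    have : (Stream'.drop k b).get (i - k) = b.get i := by
      rw [Stream'.get_drop, Nat.add_sub_of_le hk]
    rw [show prodFrom b i [] = b.get i from rfl, ← this]
    exact Hindman.FP.singleton _ _
  | cons j l ih =>
    intro i k hk hpw
    have hij : i < j := (List.pairwise_cons.mp hpw).1 j List.mem_cons_self
    have htail : (j :: l).Pairwise (· < ·) := (List.pairwise_cons.mp hpw).2
    have hx : prodFrom b j l ∈ Hindman.FP (Stream'.drop (i + 1) b) :=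
      ih j (i + 1) (Nat.succ_le_of_lt hij) htail
    have htl : (Stream'.drop i b).tail = Stream'.drop (i + 1) b := by
      rw [Stream'.tail_eq_drop, Stream'.drop_drop, Nat.add_comm]
    have hx' : prodFrom b j l ∈ Hindman.FP (Stream'.drop i b).tail := by rwa [htl]
    have hcons := Hindman.FP.cons (Stream'.drop i b) _ hx'
    rw [Stream'.head_drop] at hcons
    have : Stream'.drop (i - k) (Stream'.drop k b) = Stream'.drop i b := by
      rw [Stream'.drop_drop, Nat.add_sub_of_le hk]
    have hsub := Hindman.FP_drop_subset_FP (Stream'.drop k b) (i - k)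
    rw [this] at hsub
    exact hsub hcons

lemma mem_prodFrom_s (b : Stream' MB) :
    ∀ (l : List ℕ) (i : ℕ) (x : ℕ),
      x ∈ (prodFrom b i l).s ↔ x ∈ (b.get i).s ∨ ∃ j ∈ l, x ∈ (b.get j).s := by
  intro l
  induction l with
  | nil => intro i x; simp [prodFrom]
  | cons j l ih =>
    intro i x
    show x ∈ (b.get i * prodFrom b j l).s ↔ _
    rw [MB.mul_def]
    simp only [Finset.mem_union, ih j x, List.mem_cons]
    constructor
    · rintro (h | h | ⟨j', hj', h⟩)
      · exact Or.inl h
      · exact Or.inr ⟨j, Or.inl rfl, h⟩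
      · exact Or.inr ⟨j', Or.inr hj', h⟩
    · rintro (h | ⟨j', (rfl | hj'), h⟩)
      · exact Or.inl h
      · exact Or.inr (Or.inl h)
      · exact Or.inr (Or.inr ⟨j', hj', h⟩)

end JsetAux


namespace JsetAux


lemma blocks_from_b {X : Set MB} (b : Stream' MB)
    (hb : Hindman.FP b ⊆ X ∩ {m | m ∈ Hindman.FP aMB}) :
    ∃ Γ : ℕ → List ℕ, (∀ k, Γ k ≠ []) ∧
      ∀ ks : List ℕ, ks ≠ [] → ks.Pairwise (· < ·) →
        (ks.flatMap Γ).Pairwise (· < ·) ∧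
        ∃ P : MB, P ∈ X ∧ Finset.sort P.s (· ≤ ·) = ks.flatMap Γ := by
  classical
  -- basic facts about the stream b
  have hbm : ∀ m : ℕ, b.get m ∈ Hindman.FP aMB ∧ (b.get m) ∈ X := by
    intro m
    have := hb (Hindman.FP.singleton b m)
    exact ⟨this.2, this.1⟩
  have hcard : ∀ m : ℕ, (b.get m).c = (b.get m).s.card := fun m => (mem_FP_aMB (hbm m).1).1
  have hne : ∀ m : ℕ, (b.get m).s.Nonempty := fun m => (mem_FP_aMB (hbm m).1).2
  have hdisj : ∀ m m' : ℕ, m < m' → Disjoint (b.get m).s (b.get m').s := by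
    intro m m' hmm
    have hmem := hb (Hindman.FP.mul_two b m m' hmm)
    have h2 := (mem_FP_aMB hmem.2).1
    rw [MB.mul_def] at h2
    simp only at h2
    have h2' : (b.get m).c + (b.get m').c = ((b.get m).s ∪ (b.get m').s).card := h2
    have h3 := hcard m
    have h4 := hcard m'
    have hci := Finset.card_union_add_card_inter (b.get m).s (b.get m').s
    rw [Finset.disjoint_iff_inter_eq_empty, ← Finset.card_eq_zero]
    omega
  -- only finitely many blocks meet any initial segment
  have hfind : ∀ p N : ℕ, ∃ m, p < m ∧ ∀ y ∈ (b.get m).s, N < y := by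
    intro p N
    by_contra hcon
    push_neg at hcon
    have pick : ∀ i : ℕ, ∃ y, y ∈ (b.get (p + 1 + i)).s ∧ y ≤ N := by
      intro i
      obtain ⟨y, hy, hyN⟩ := hcon (p + 1 + i) (by omega)
      exact ⟨y, hy, hyN⟩
    choose y hy hyN using pick
    have : ∀ i, y i < N + 1 := fun i => Nat.lt_succ_of_le (hyN i)
    obtain ⟨i, j, hij, hyeq⟩ :=
      Finite.exists_ne_map_eq_of_infinite (fun i : ℕ => (⟨y i, this i⟩ : Fin (N + 1)))
    have hyij : y i = y j := by simpa using hyeq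
    rcases Nat.lt_or_ge (p + 1 + i) (p + 1 + j) with h | h
    · exact absurd (Finset.disjoint_left.mp (hdisj _ _ h) (hy i)) (by rw [hyij]; exact fun hh => hh (hy j))
    · have hji : p + 1 + j < p + 1 + i := by
        rcases Nat.lt_or_ge (p+1+j) (p+1+i) with h' | h'
        · exact h'
        · omega
      exact absurd (Finset.disjoint_left.mp (hdisj _ _ hji) (hy j)) (by rw [← hyij]; exact fun hh => hh (hy i))
  -- choose a spatially increasing subsequence φ
  let next : ℕ → ℕ := fun p => (hfind p ((b.get p).s.sup id)).choose
  have hnext : ∀ p, p < next p ∧ ∀ y ∈ (b.get (next p)).s, (b.get p).s.sup id < y :=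
    fun p => (hfind p ((b.get p).s.sup id)).choose_spec
  let φ : ℕ → ℕ := fun n => Nat.rec 0 (fun _ prev => next prev) n
  have hφsucc : ∀ n, φ (n + 1) = next (φ n) := fun n => rfl
  have hφmono : StrictMono φ := by
    apply strictMono_nat_of_lt_succ
    intro n
    rw [hφsucc]
    exact (hnext (φ n)).1
  have hspatial1 : ∀ n, ∀ x ∈ (b.get (φ n)).s, ∀ y ∈ (b.get (φ (n + 1))).s, x < y := by
    intro n x hx y hy
    have := (hnext (φ n)).2 y (by rw [← hφsucc]; exact hy)
    exact lt_of_le_of_lt (Finset.le_sup (f := id) hx) this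
  have hspatial : ∀ n m, n < m → ∀ x ∈ (b.get (φ n)).s, ∀ y ∈ (b.get (φ m)).s, x < y := by
    intro n m hnm
    induction m with
    | zero => omega
    | succ m ih =>
      intro x hx y hy
      rcases Nat.lt_or_ge n m with h | h
      · obtain ⟨z, hz⟩ := hne (φ m)
        exact lt_trans (ih h x hx z hz) (hspatial1 m z hz y hy)
      · have : n = m := by omega
        subst this
        exact hspatial1 n x hx y hy
  -- the blocks
  refine ⟨fun k => ((b.get (φ k)).s).sort (· ≤ ·), ?_, ?_⟩
  · intro k
    obtain ⟨x, hx⟩ := hne (φ k)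
    exact List.ne_nil_of_mem ((Finset.mem_sort _).mpr hx)
  · intro ks hksne hkspw
    set Γ : ℕ → List ℕ := fun k => ((b.get (φ k)).s).sort (· ≤ ·) with hΓ
    have hpwbind : (ks.flatMap Γ).Pairwise (· < ·) := by
      clear hksne
      induction ks with
      | nil => simp
      | cons k ks ih =>
        rw [List.flatMap_cons, List.pairwise_append]
        refine ⟨(Finset.sortedLT_sort _).pairwise, ih (List.pairwise_cons.mp hkspw).2, ?_⟩
        intro x hx y hy
        rw [List.mem_flatMap] at hy
        obtain ⟨k', hk', hy'⟩ := hy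
        have hkk' : k < k' := (List.pairwise_cons.mp hkspw).1 k' hk'
        exact hspatial k k' hkk' x ((Finset.mem_sort _).mp hx) y
          ((Finset.mem_sort _).mp hy')
    refine ⟨hpwbind, ?_⟩
    -- the product element
    obtain ⟨k₀, ks', rfl⟩ := List.exists_cons_of_ne_nil hksne
    set P : MB := prodFrom b (φ k₀) (ks'.map φ) with hP
    have hPpw : (φ k₀ :: ks'.map φ).Pairwise (· < ·) := by
      have : (φ k₀ :: ks'.map φ) = (k₀ :: ks').map φ := by simp
      rw [this]
      exact hkspw.map φ (fun _ _ h => hφmono h)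
    have hPFP : P ∈ Hindman.FP b := by
      have := prodFrom_mem b (ks'.map φ) (φ k₀) 0 (Nat.zero_le _) hPpw
      have hdz : Stream'.drop 0 b = b := by
        apply Stream'.ext
        intro n
        rw [Stream'.get_drop, Nat.zero_add]
      rwa [hdz] at this
    refine ⟨P, (hb hPFP).1, ?_⟩
    -- identify sorted support with the flattened list
    have hmemiff : ∀ x, x ∈ (k₀ :: ks').flatMap Γ ↔ x ∈ P.s := by
      intro x
      rw [List.mem_flatMap, hP, mem_prodFrom_s]
      constructor
      · rintro ⟨k, hk, hx⟩
        rw [hΓ] at hx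
        have hx' := (Finset.mem_sort _).mp hx
        rcases List.mem_cons.mp hk with rfl | hk'
        · exact Or.inl hx'
        · exact Or.inr ⟨φ k, List.mem_map_of_mem (f := φ) hk', hx'⟩
      · rintro (hx | ⟨j, hj, hx⟩)
        · exact ⟨k₀, List.mem_cons_self, (Finset.mem_sort _).mpr hx⟩
        · rw [List.mem_map] at hj
          obtain ⟨k, hk, rfl⟩ := hj
          exact ⟨k, List.mem_cons_of_mem _ hk, (Finset.mem_sort _).mpr hx⟩
    have hnodup : ((k₀ :: ks').flatMap Γ).Nodup :=
      hpwbind.imp (fun h => Nat.ne_of_lt h)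
    have htofin : ((k₀ :: ks').flatMap Γ).toFinset = P.s := by
      apply Finset.ext
      intro x
      rw [List.mem_toFinset]
      exact hmemiff x
    haveI : IsAntisymm ℕ (· < ·) :=
      ⟨fun a b h h' => absurd (lt_trans h h') (lt_irrefl a)⟩
    apply List.Perm.eq_of_pairwise' (r := (· < ·))
    rotate_right
    · apply List.perm_of_nodup_nodup_toFinset_eq (Finset.sort_nodup _ _) hnodup
      rw [Finset.sort_toFinset, htofin]
    · exact (Finset.sortedLT_sort _).pairwise
    · exact hpwbind

end JsetAux


theorem jsetNC_prod {S₁ S₂ : Type*} [Semigroup S₁] [Semigroup S₂]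
    {A : Set S₁} {B : Set S₂} (hA : IsJSetNC A) (hB : IsJSetNC B) :
    IsJSetNC (A ×ˢ B) := by

  classical
  intro F hF
  open JsetAux in
  -- the projected families
  set G₁ : Finset (ℕ → S₁) := F.image (fun f => fun n => (f n).1) with hG₁
  set G₂ : Finset (ℕ → S₂) := F.image (fun f => fun n => (f n).2) with hG₂
  have hG₁ne : G₁.Nonempty := hF.image _
  have hG₂ne : G₂.Nonempty := hF.image _
  -- Hindman machinery
  obtain ⟨U, Uidem, hUa⟩ := Hindman.exists_idempotent_ultrafilter_le_FP JsetAux.aMB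
  have hUa' : {m : JsetAux.MB | m ∈ Hindman.FP JsetAux.aMB} ∈ U := hUa
  set Good : Set JsetAux.MB :=
    {x | JsetAux.SolvesOn A G₁ (Finset.sort x.s (· ≤ ·))} with hGood
  -- Good is U-large
  have hGoodU : Good ∈ U := by
    by_contra hnot
    have hcompl : Goodᶜ ∈ U := (Ultrafilter.compl_mem_iff_notMem).mpr hnot
    obtain ⟨b, hb⟩ := Hindman.exists_FP_of_large U Uidem
      (Goodᶜ ∩ {m | m ∈ Hindman.FP JsetAux.aMB}) (Filter.inter_mem hcompl hUa')
    obtain ⟨Γ, hΓne, hΓ⟩ := JsetAux.blocks_from_b b hb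
    obtain ⟨ks, hksne, hkspw, hsol⟩ := JsetAux.exists_block_solution hA G₁ hG₁ne Γ hΓne
    obtain ⟨-, P, hPX, hPsort⟩ := hΓ ks hksne hkspw
    rw [← hPsort] at hsol
    exact hPX hsol
  -- extract the strong array
  obtain ⟨b, hb⟩ := Hindman.exists_FP_of_large U Uidem
    (Good ∩ {m | m ∈ Hindman.FP JsetAux.aMB}) (Filter.inter_mem hGoodU hUa')
  obtain ⟨Γ, hΓne, hΓ⟩ := JsetAux.blocks_from_b b hb
  -- solve the B side over the blocks
  obtain ⟨ks, hksne, hkspw, hsolB⟩ := JsetAux.exists_block_solution hB G₂ hG₂ne Γ hΓne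
  obtain ⟨hLpw, P, hPX, hPsort⟩ := hΓ ks hksne hkspw
  set L : List ℕ := ks.flatMap Γ with hL
  have hsolA : JsetAux.SolvesOn A G₁ L := by
    rw [← hPsort]
    exact hPX
  -- combine
  obtain ⟨c₁, d₁, hlen₁, h₁⟩ := hsolA
  obtain ⟨c₂, d₂, hlen₂, h₂⟩ := hsolB
  have hLne : L ≠ [] := by
    obtain ⟨k₀, ks', rfl⟩ := List.exists_cons_of_ne_nil hksne
    rw [hL, List.flatMap_cons]
    intro hcon
    exact hΓne k₀ (List.append_eq_nil_iff.mp hcon).1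
  have hLpos : 0 < L.length := List.length_pos_iff.mpr hLne
  refine ⟨L.length, hLpos,
    fun j => ((if h' : (j : ℕ) < c₁.length then c₁.get ⟨j, h'⟩ else d₁),
              (if h' : (j : ℕ) < c₂.length then c₂.get ⟨j, h'⟩ else d₂)),
    L.get, ?_, ?_⟩
  · intro i j hij
    exact List.pairwise_iff_get.mp hLpw i j hij
  · intro f hf
    rw [Set.mem_prod]
    constructor
    · rw [JsetAux.interProd_fst]
      have : (fun j : Fin (L.length + 1) =>
          ((fun j => ((if h' : (j : ℕ) < c₁.length then c₁.get ⟨j, h'⟩ else d₁),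
              (if h' : (j : ℕ) < c₂.length then c₂.get ⟨j, h'⟩ else d₂))) j).1)
          = fun j : Fin (L.length + 1) =>
              if h' : (j : ℕ) < c₁.length then c₁.get ⟨j, h'⟩ else d₁ := rfl
      rw [this, JsetAux.toPattern c₁ L d₁ hlen₁]
      exact h₁ _ (Finset.mem_image_of_mem _ hf)
    · rw [JsetAux.interProd_snd]
      have : (fun j : Fin (L.length + 1) =>
          ((fun j => ((if h' : (j : ℕ) < c₁.length then c₁.get ⟨j, h'⟩ else d₁),
              (if h' : (j : ℕ) < c₂.length then c₂.get ⟨j, h'⟩ else d₂))) j).2)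
          = fun j : Fin (L.length + 1) =>
              if h' : (j : ℕ) < c₂.length then c₂.get ⟨j, h'⟩ else d₂ := rfl
      rw [this, JsetAux.toPattern c₂ L d₂ hlen₂]
      exact h₂ _ (Finset.mem_image_of_mem _ hf)
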